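/- Let (X,d) be a metric space containing a rough geodesic ray, and let φ : [0,∞) → [0,∞) be an approximately nondecreasing, unbounded metric transform. If the transformed space (X,d_φ) is Gromov hyperbolic, then either (i) (X,d) is Gromov hyperbolic and φ is an approximate dilation, or (ii) (X,d_φ) is approximately ultrametric; moreover conditions (i) and (ii) cannot both hold. -/

import Mathlib

/-- `d` is a metric on `X`: it vanishes exactly on the diagonal, is symmetric,
and satisfies the triangle inequality. -/
def IsMetricOn {X : Type*} (d : X → X → ℝ) : Prop :=
  (∀ x y : X, d x y = 0 ↔ x = y) ∧ (∀ x y : X, d x y = d y x) ∧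
    (∀ x y z : X, d x z ≤ d x y + d y z)

/-- `φ : [0,∞) → [0,∞)` is a metric transform: for every metric space `(X,d)`,
`φ ∘ d` is again a metric on `X`. -/
def IsMetricTransform (φ : ℝ → ℝ) : Prop :=
  ∀ (X : Type) (d : X → X → ℝ), IsMetricOn d → IsMetricOn (fun x y => φ (d x y))

/-- The Gromov product `(x|y)_w` for a distance function `d`. -/
noncomputable def gromovProd {X : Type*} (d : X → X → ℝ) (w x y : X) : ℝ :=
  (d x w + d y w - d x y) / 2

/-- `d` is `δ`-hyperbolic: `(x|y)_w ≥ min{(x|z)_w, (y|z)_w} − δ` for all `x,y,z,w`. -/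
def IsDeltaHyp {X : Type*} (d : X → X → ℝ) (δ : ℝ) : Prop :=
  ∀ w x y z : X, min (gromovProd d w x z) (gromovProd d w y z) - δ ≤ gromovProd d w x y

/-- `d` is Gromov hyperbolic: it is `δ`-hyperbolic for some `δ ≥ 0`. -/
def IsGromovHyp {X : Type*} (d : X → X → ℝ) : Prop :=
  ∃ δ : ℝ, 0 ≤ δ ∧ IsDeltaHyp d δ

/-- `φ` is approximately nondecreasing on `[0,∞)`:
`η`-nondecreasing for some `η ≥ 0`. -/
def ApproxNondecreasing (φ : ℝ → ℝ) : Prop :=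
  ∃ η : ℝ, 0 ≤ η ∧ ∀ t s : ℝ, 0 ≤ t → t ≤ s → φ t ≤ φ s + η

/-- `φ` is unbounded on `[0,∞)`. -/
def UnboundedOnNonneg (φ : ℝ → ℝ) : Prop :=
  ∀ M : ℝ, ∃ t : ℝ, 0 ≤ t ∧ M < φ t

/-- `φ` is a `(λ,k)`-approximate dilation for some `λ > 0`, `k ≥ 0`. -/
def ApproxDilation (φ : ℝ → ℝ) : Prop :=
  ∃ lam k : ℝ, 0 < lam ∧ 0 ≤ k ∧ ∀ t : ℝ, 0 ≤ t → |φ t - lam * t| ≤ k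

/-- `φ` is logarithm-like: `t ↦ φ(2t) − φ(t)` is bounded from above on `[0,∞)`. -/
def LogarithmLike (φ : ℝ → ℝ) : Prop :=
  ∃ C : ℝ, ∀ t : ℝ, 0 ≤ t → φ (2 * t) - φ t ≤ C

/-- The distance `|x − y|_φ = φ(|x − y|)` on the half line `[0,∞)`. -/
noncomputable def halfLineDist (φ : ℝ → ℝ) (x y : {t : ℝ // 0 ≤ t}) : ℝ :=
  φ |x.1 - y.1|

/-- `(X,d)` contains a `k`-rough geodesic ray for some `k ≥ 0`. -/
def HasRoughGeodesicRay (X : Type*) (d : X → X → ℝ) : Prop :=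
  ∃ k : ℝ, 0 ≤ k ∧ ∃ γ : ℝ → X, ∀ t s : ℝ, 0 ≤ t → 0 ≤ s →
    |t - s| - k ≤ d (γ t) (γ s) ∧ d (γ t) (γ s) ≤ |t - s| + k

/-- `d` is approximately ultrametric: `δ`-ultrametric for some `δ ≥ 0`. -/
def ApproxUltrametric {X : Type*} (d : X → X → ℝ) : Prop :=
  ∃ δ : ℝ, 0 ≤ δ ∧ ∀ x y z : X, d x y ≤ max (d x z) (d z y) + δ

/-- `d` is `k`-roughly geodesic: every pair of points is joined by a `k`-rough
geodesic segment. -/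
def RoughlyGeodesicK {X : Type*} (d : X → X → ℝ) (k : ℝ) : Prop :=
  ∀ x y : X, ∃ b : ℝ, 0 ≤ b ∧ ∃ γ : ℝ → X, γ 0 = x ∧ γ b = y ∧
    ∀ t s : ℝ, t ∈ Set.Icc 0 b → s ∈ Set.Icc 0 b →
      |t - s| - k ≤ d (γ t) (γ s) ∧ d (γ t) (γ s) ≤ |t - s| + k

/-- `d` has the `k`-rough midpoint property. -/
def RoughMidpointK {X : Type*} (d : X → X → ℝ) (k : ℝ) : Prop :=
  ∀ x y : X, ∃ z : X, max (d x z) (d y z) ≤ d x y / 2 + k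

/-- `(a,b,c)` is a triangle triplet. -/
def IsTriangleTriplet (a b c : ℝ) : Prop := a ≤ b + c ∧ b ≤ a + c ∧ c ≤ a + b


set_option maxHeartbeats 1000000 in
lemma raad (ψ : ℝ → ℝ) (c η' : ℝ) (hc : 0 ≤ c) (hη' : 0 ≤ η') (h0 : ψ 0 = 0)
    (hadd : ∀ a b : ℝ, 0 ≤ a → 0 ≤ b → |ψ (a + b) - ψ a - ψ b| ≤ c)
    (hmono : ∀ t s : ℝ, 0 ≤ t → t ≤ s → ψ t ≤ ψ s + η')
    (hub : ∀ M : ℝ, ∃ t : ℝ, 0 ≤ t ∧ M < ψ t) :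
    ∃ lam : ℝ, 0 < lam ∧ ∀ x : ℝ, 0 ≤ x → |ψ x - lam * x| ≤ c := by
  have hnmul : ∀ x : ℝ, 0 ≤ x → ∀ n : ℕ, |ψ (n * x) - n * ψ x| ≤ n * c := by
    intro x hx n
    induction n with
    | zero => simp [h0]
    | succ n ih =>
      have h1 := hadd ((n : ℝ) * x) x (by positivity) hx
      have e : ((n : ℕ) + 1 : ℝ) * x = (n : ℝ) * x + x := by ring
      rw [abs_le] at ih h1 ⊢
      push_cast
      rw [e]
      constructor <;> · obtain ⟨i1, i2⟩ := ih; obtain ⟨j1, j2⟩ := h1; nlinarith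
  have key : ∀ x y : ℝ, 0 < x → x ≤ y →
      (y / x) * ψ x - ((1 + y / x) * c + 2 * |ψ x| + η') ≤ ψ y ∧
      ψ y ≤ (y / x) * ψ x + ((1 + y / x) * c + 2 * |ψ x| + η') := by
    intro x y hx hxy
    set n : ℕ := ⌊y / x⌋₊ with hn
    have hyx0 : 0 ≤ y / x := div_nonneg (le_trans hx.le hxy) hx.le
    have hn_le : (n : ℝ) ≤ y / x := Nat.floor_le hyx0
    have hlt : y / x < (n : ℝ) + 1 := Nat.lt_floor_add_one _
    have hnx_le : (n : ℝ) * x ≤ y := by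
      have := (le_div_iff₀ hx).mp hn_le
      linarith
    have hy_lt : y < ((n : ℝ) + 1) * x := by
      have := (div_lt_iff₀ hx).mp hlt
      linarith
    set r := y - (n : ℝ) * x with hr
    have hr0 : 0 ≤ r := by simp [hr]; linarith
    have hrx : r ≤ x := by simp [hr]; nlinarith
    have h1 := hadd ((n : ℝ) * x) r (by positivity) hr0
    have h2 := hnmul x hx.le n
    have h3 : ψ r ≤ ψ x + η' := hmono r x hr0 hrx
    have h4 : -η' ≤ ψ r := by
      have := hmono 0 r le_rfl hr0; rw [h0] at this; linarith
    have h5 : (n : ℝ) * x + r = y := by rw [hr]; ring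
    rw [h5] at h1
    rw [abs_le] at h1 h2
    have habs1 : ψ x ≤ |ψ x| := le_abs_self _
    have habs2 : -|ψ x| ≤ ψ x := neg_abs_le _
    have hfrac0 : 0 ≤ y / x - (n : ℝ) := by linarith
    have hfrac1 : y / x - (n : ℝ) ≤ 1 := by linarith
    have hb1 : (y / x - (n : ℝ)) * ψ x ≤ |ψ x| := by
      rcases le_total 0 (ψ x) with h | h
      · nlinarith
      · nlinarith [abs_nonneg (ψ x)]
    have hb2 : -|ψ x| ≤ (y / x - (n : ℝ)) * ψ x := by
      rcases le_total 0 (ψ x) with h | h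
      · nlinarith [abs_nonneg (ψ x)]
      · nlinarith
    have hnc : (n : ℝ) * c ≤ (y / x) * c := mul_le_mul_of_nonneg_right hn_le hc
    have hexp : (n : ℝ) * ψ x = (y / x) * ψ x - (y / x - (n : ℝ)) * ψ x := by ring
    obtain ⟨a1, a2⟩ := h1
    obtain ⟨b1, b2⟩ := h2
    constructor
    · linarith
    · linarith
  have hcomp : ∀ x x' : ℝ, 0 < x → 0 < x' → (ψ x - c) / x ≤ (ψ x' + c) / x' := by
    intro x x' hx hx'
    refine le_of_forall_pos_le_add ?_
    intro ε hε
    set Q := 2 * c + 2 * |ψ x| + 2 * |ψ x'| + 2 * η' with hQdef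
    have hQ0 : 0 ≤ Q := by positivity
    set y := max (max x x') (Q / ε) with hy
    have hyx : x ≤ y := le_trans (le_max_left _ _) (le_max_left _ _)
    have hyx' : x' ≤ y := le_trans (le_max_right _ _) (le_max_left _ _)
    have hy0 : 0 < y := lt_of_lt_of_le hx hyx
    have hyQ : Q / ε ≤ y := le_max_right _ _
    have h1 := (key x y hx hyx).1
    have h2 := (key x' y hx' hyx').2
    have e3 : (y / x) * (ψ x - c) ≤ (y / x') * (ψ x' + c) + Q := by
      have er1 : (1 + y / x) * c = c + (y / x) * c := by ring
      have er2 : (1 + y / x') * c = c + (y / x') * c := by ring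
      have er3 : (y / x) * (ψ x - c) = (y / x) * ψ x - (y / x) * c := by ring
      have er4 : (y / x') * (ψ x' + c) = (y / x') * ψ x' + (y / x') * c := by ring
      rw [er1] at h1
      rw [er2] at h2
      rw [er3, er4, hQdef]
      linarith
    have e4 : (ψ x - c) / x ≤ (ψ x' + c) / x' + Q / y := by
      have l1 : (ψ x - c) / x = ((y / x) * (ψ x - c)) / y := by
        rw [show (y / x) * (ψ x - c) = y * ((ψ x - c) / x) by ring]
        exact (mul_div_cancel_left₀ _ (ne_of_gt hy0)).symm
      have l2 : ((y / x') * (ψ x' + c) + Q) / y = (ψ x' + c) / x' + Q / y := by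
        rw [add_div, show (y / x') * (ψ x' + c) = y * ((ψ x' + c) / x') by ring,
          mul_div_cancel_left₀ _ (ne_of_gt hy0)]
      rw [l1, ← l2]
      exact (div_le_div_iff_of_pos_right hy0).mpr e3
    have e5 : Q / y ≤ ε := by
      have hq := (div_le_iff₀ hε).mp hyQ
      rw [div_le_iff₀ hy0]
      linarith
    linarith
  have hSne : ((fun x => (ψ x - c) / x) '' Set.Ioi (0 : ℝ)).Nonempty :=
    ⟨(ψ 1 - c) / 1, ⟨1, by norm_num, rfl⟩⟩
  have hSbdd : BddAbove ((fun x => (ψ x - c) / x) '' Set.Ioi (0 : ℝ)) := by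
    refine ⟨(ψ 1 + c) / 1, ?_⟩
    rintro z ⟨x, hx, rfl⟩
    exact hcomp x 1 hx one_pos
  set lam := sSup ((fun x => (ψ x - c) / x) '' Set.Ioi (0 : ℝ)) with hlam
  have hup : ∀ x : ℝ, 0 < x → (ψ x - c) / x ≤ lam := fun x hx =>
    le_csSup hSbdd ⟨x, hx, rfl⟩
  have hdown : ∀ x : ℝ, 0 < x → lam ≤ (ψ x + c) / x := fun x hx =>
    csSup_le hSne (by rintro z ⟨x', hx', rfl⟩; exact hcomp x' x hx' hx)
  have hbound : ∀ x : ℝ, 0 ≤ x → |ψ x - lam * x| ≤ c := by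
    intro x hx
    rcases eq_or_lt_of_le hx with h | h
    · rw [← h]; simp [h0, hc]
    · have h1 := (div_le_iff₀ h).mp (hup x h)
      have h2 := (le_div_iff₀ h).mp (hdown x h)
      rw [abs_le]; constructor <;> linarith
  refine ⟨lam, ?_, hbound⟩
  by_contra hl
  push_neg at hl
  obtain ⟨t, ht0, htb⟩ := hub c
  have := hbound t ht0
  rw [abs_le] at this
  nlinarith [this.2]

set_option maxHeartbeats 1600000 in
lemma dichotomy_phi (φ : ℝ → ℝ) (η Δ : ℝ) (hη : 0 ≤ η) (hΔ : 0 ≤ Δ)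
    (hpos : ∀ t : ℝ, 0 ≤ t → 0 ≤ φ t) (h0 : φ 0 = 0)
    (hsub : ∀ a b : ℝ, 0 ≤ a → 0 ≤ b → φ (a + b) ≤ φ a + φ b)
    (hmono : ∀ t s : ℝ, 0 ≤ t → t ≤ s → φ t ≤ φ s + η)
    (hub : ∀ M : ℝ, ∃ t : ℝ, 0 ≤ t ∧ M < φ t)
    (hFPabs : ∀ p q r s : ℝ, 0 ≤ p → 0 ≤ q → 0 ≤ r → 0 ≤ s →
      φ |p - q| + φ |r - s| ≤ max (φ |p - r| + φ |q - s|) (φ |p - s| + φ |q - r|) + Δ) :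
    LogarithmLike φ ∨ ApproxDilation φ := by
  by_cases hL : LogarithmLike φ
  · exact Or.inl hL
  right
  unfold LogarithmLike at hL
  push_neg at hL
  -- hL : ∀ C, ∃ t, 0 ≤ t ∧ C < φ (2*t) - φ t
  -- Three sorted instances of the four-point condition
  have hFP : ∀ a m1 m2 : ℝ, 0 ≤ a → 0 ≤ m1 → m1 ≤ m2 →
      φ (m1 + a) + φ m2 ≤ max (φ a + φ (m2 - m1)) (φ (m2 + a) + φ m1) + Δ := by
    intro a m1 m2 ha hm1 h12
    have h := hFPabs 0 (m1 + a) a (m2 + a) le_rfl (by linarith) ha (by linarith)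
    rw [show |(0:ℝ) - (m1 + a)| = m1 + a by
          rw [zero_sub, abs_neg, abs_of_nonneg (by linarith : (0:ℝ) ≤ m1 + a)],
        show |a - (m2 + a)| = m2 by
          rw [show a - (m2 + a) = -m2 by ring, abs_neg,
            abs_of_nonneg (by linarith : (0:ℝ) ≤ m2)],
        show |(0:ℝ) - a| = a by rw [zero_sub, abs_neg, abs_of_nonneg ha],
        show |m1 + a - (m2 + a)| = m2 - m1 by
          rw [show m1 + a - (m2 + a) = -(m2 - m1) by ring, abs_neg,
            abs_of_nonneg (by linarith : (0:ℝ) ≤ m2 - m1)],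
        show |(0:ℝ) - (m2 + a)| = m2 + a by
          rw [zero_sub, abs_neg, abs_of_nonneg (by linarith : (0:ℝ) ≤ m2 + a)],
        show |m1 + a - a| = m1 by
          rw [show m1 + a - a = m1 by ring, abs_of_nonneg hm1]] at h
    exact h
  have hFP2 : ∀ a m1 m2 : ℝ, 0 ≤ a → 0 ≤ m1 → m1 ≤ m2 →
      φ (m2 + a) + φ m1 ≤ max (φ (m2 - m1) + φ a) (φ m2 + φ (m1 + a)) + Δ := by
    intro a m1 m2 ha hm1 h12
    have h := hFPabs 0 (m2 + a) (m2 - m1) m2 le_rfl (by linarith) (by linarith) (by linarith)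
    rw [show |(0:ℝ) - (m2 + a)| = m2 + a by
          rw [zero_sub, abs_neg, abs_of_nonneg (by linarith : (0:ℝ) ≤ m2 + a)],
        show |m2 - m1 - m2| = m1 by
          rw [show m2 - m1 - m2 = -m1 by ring, abs_neg, abs_of_nonneg hm1],
        show |(0:ℝ) - (m2 - m1)| = m2 - m1 by
          rw [zero_sub, abs_neg, abs_of_nonneg (by linarith : (0:ℝ) ≤ m2 - m1)],
        show |m2 + a - m2| = a by rw [show m2 + a - m2 = a by ring, abs_of_nonneg ha],
        show |(0:ℝ) - m2| = m2 by
          rw [zero_sub, abs_neg, abs_of_nonneg (by linarith : (0:ℝ) ≤ m2)],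
        show |m2 + a - (m2 - m1)| = m1 + a by
          rw [show m2 + a - (m2 - m1) = m1 + a by ring,
            abs_of_nonneg (by linarith : (0:ℝ) ≤ m1 + a)]] at h
    exact h
  have hFP3 : ∀ a t : ℝ, 0 ≤ a → a ≤ t →
      φ (2 * t) + φ a ≤ max (φ (t - a) + φ t) (φ t + φ (t + a)) + Δ := by
    intro a t ha hat
    have ht : 0 ≤ t := le_trans ha hat
    have h := hFPabs 0 (2 * t) (t - a) t le_rfl (by linarith) (by linarith) ht
    rw [show |(0:ℝ) - 2 * t| = 2 * t by
          rw [zero_sub, abs_neg, abs_of_nonneg (by linarith : (0:ℝ) ≤ 2 * t)],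
        show |t - a - t| = a by rw [show t - a - t = -a by ring, abs_neg, abs_of_nonneg ha],
        show |(0:ℝ) - (t - a)| = t - a by
          rw [zero_sub, abs_neg, abs_of_nonneg (by linarith : (0:ℝ) ≤ t - a)],
        show |2 * t - t| = t by rw [show 2 * t - t = t by ring, abs_of_nonneg ht],
        show |(0:ℝ) - t| = t by rw [zero_sub, abs_neg, abs_of_nonneg ht],
        show |2 * t - (t - a)| = t + a by
          rw [show 2 * t - (t - a) = t + a by ring,
            abs_of_nonneg (by linarith : (0:ℝ) ≤ t + a)]] at h
    exact h
  -- Step W : witnesses propagate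
  have hW : ∀ t : ℝ, 0 ≤ t → Δ + η < φ (2 * t) - φ t →
      ∀ m, t ≤ m → φ m + (φ (2 * t) - φ t) - Δ ≤ φ (m + t) := by
    intro t ht hg m hm
    have h := hFP t t m ht ht hm
    rw [show t + t = 2 * t by ring] at h
    have hmt : φ (m - t) ≤ φ m + η := hmono (m - t) m (by linarith) (by linarith)
    rcases max_cases (φ t + φ (m - t)) (φ (m + t) + φ t) with ⟨hmax, _⟩ | ⟨hmax, _⟩ <;>
      rw [hmax] at h <;> linarith
  -- Step G : growth
  have hG : ∀ N : ℝ, ∃ M : ℝ, 0 ≤ M ∧ ∀ m, M ≤ m → N < φ m := by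
    obtain ⟨t1, ht1, hgt1⟩ := hL (Δ + 2 * η + 1)
    have hgb : Δ + η < φ (2 * t1) - φ t1 := by linarith
    intro N
    have hiter : ∀ j : ℕ, φ (2 * t1) + j * (φ (2 * t1) - φ t1 - Δ) ≤ φ (2 * t1 + j * t1) := by
      intro j
      induction j with
      | zero => simp
      | succ j ih =>
        have hw := hW t1 ht1 hgb (2 * t1 + j * t1)
          (by nlinarith [Nat.cast_nonneg (α := ℝ) j])
        rw [show 2 * t1 + (j : ℝ) * t1 + t1 = 2 * t1 + ((j : ℝ) + 1) * t1 by ring] at hw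
        push_cast
        nlinarith
    set n : ℕ := ⌈max N 0⌉₊ + 1 with hn
    have hnN : max N 0 ≤ (n : ℝ) := by
      rw [hn]; push_cast
      linarith [Nat.le_ceil (max N 0)]
    have hn1 : (1 : ℝ) ≤ (n : ℝ) := by
      rw [hn]; push_cast
      linarith [Nat.cast_nonneg (α := ℝ) ⌈max N 0⌉₊]
    refine ⟨2 * t1 + n * t1, by positivity, ?_⟩
    intro m hm
    have h1 := hiter n
    have h2 : φ (2 * t1 + n * t1) ≤ φ m + η :=
      hmono (2 * t1 + n * t1) m (by positivity) hm
    have h3 : 0 ≤ φ (2 * t1) := hpos _ (by linarith)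
    have h4 : (n : ℝ) * (φ (2 * t1) - φ t1 - Δ) ≥ n * (η + 1) := by
      apply mul_le_mul_of_nonneg_left (by linarith) (by linarith)
    have h5 : (n : ℝ) * (η + 1) ≥ 1 * (η + 1) :=
      mul_le_mul_of_nonneg_right hn1 (by linarith)
    have h6 : (n : ℝ) * (η + 1) ≥ (n : ℝ) * 1 :=
      mul_le_mul_of_nonneg_left (by linarith) (by linarith [hn1])
    have hN : N ≤ max N 0 := le_max_left _ _
    nlinarith
  -- choice of stabilization bases
  have hMex : ∀ a : ℝ, ∃ Ma : ℝ, 0 ≤ Ma ∧ ∀ m, Ma ≤ m → φ a + Δ + 2 * η < φ m :=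
    fun a => hG (φ a + Δ + 2 * η)
  choose M hM0 hMgt using hMex
  -- stabilization
  have hS : ∀ a m1 m2 : ℝ, 0 ≤ a → M a ≤ m1 → m1 ≤ m2 →
      |(φ (m2 + a) - φ m2) - (φ (m1 + a) - φ m1)| ≤ Δ := by
    intro a m1 m2 ha hm1 h12
    have hm10 : 0 ≤ m1 := le_trans (hM0 a) hm1
    have hφm1 : φ a + Δ + 2 * η < φ m1 := hMgt a m1 hm1
    have hA : φ m1 ≤ φ (m1 + a) + η := hmono m1 (m1 + a) hm10 (by linarith)
    have hB : φ (m2 - m1) ≤ φ m2 + η := hmono (m2 - m1) m2 (by linarith) (by linarith)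
    have hC : φ (m2 - m1) ≤ φ (m2 + a) + η :=
      hmono (m2 - m1) (m2 + a) (by linarith) (by linarith)
    have h1 := hFP a m1 m2 ha hm10 h12
    have h2 := hFP2 a m1 m2 ha hm10 h12
    rw [abs_le]
    constructor
    · rcases max_cases (φ a + φ (m2 - m1)) (φ (m2 + a) + φ m1) with ⟨hmax, _⟩ | ⟨hmax, _⟩ <;>
        rw [hmax] at h1 <;> linarith
    · rcases max_cases (φ (m2 - m1) + φ a) (φ m2 + φ (m1 + a)) with ⟨hmax, _⟩ | ⟨hmax, _⟩ <;>
        rw [hmax] at h2 <;> linarith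
  set L : ℝ → ℝ := fun a => φ (M a + a) - φ (M a) with hLdef
  have hLh : ∀ a : ℝ, 0 ≤ a → ∀ m, M a ≤ m → |(φ (m + a) - φ m) - L a| ≤ Δ := by
    intro a ha m hm
    exact hS a (M a) m ha le_rfl hm
  -- L is roughly additive
  have hLadd : ∀ a b : ℝ, 0 ≤ a → 0 ≤ b → |L (a + b) - L a - L b| ≤ 3 * Δ := by
    intro a b ha hb
    set m := max (M a) (max (M b) (M (a + b))) with hm
    have hma : M a ≤ m := le_max_left _ _
    have hmb : M b ≤ m := le_trans (le_max_left _ _) (le_max_right _ _)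
    have hmab : M (a + b) ≤ m := le_trans (le_max_right _ _) (le_max_right _ _)
    have h1 := hLh (a + b) (by linarith) m hmab
    have h2 := hLh b hb m hmb
    have h3 := hLh a ha (m + b) (le_trans hma (by linarith))
    rw [show m + (a + b) = m + b + a by ring] at h1
    rw [abs_le] at h1 h2 h3 ⊢
    constructor <;> linarith [h1.1, h1.2, h2.1, h2.2, h3.1, h3.2]
  have hLmono : ∀ t s : ℝ, 0 ≤ t → t ≤ s → L t ≤ L s + (η + 2 * Δ) := by
    intro a b ha hab
    set m := max (M a) (M b) with hm
    have hm0 : 0 ≤ m := le_trans (hM0 a) (le_max_left _ _)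
    have h1 := hLh a ha m (le_max_left _ _)
    have h2 := hLh b (le_trans ha hab) m (le_max_right _ _)
    have h3 : φ (m + a) ≤ φ (m + b) + η := hmono (m + a) (m + b) (by linarith) (by linarith)
    rw [abs_le] at h1 h2
    linarith [h1.1, h1.2, h2.1, h2.2]
  have hLub : ∀ Bd : ℝ, ∃ a : ℝ, 0 ≤ a ∧ Bd < L a := by
    intro Bd
    obtain ⟨t, ht0, hgt⟩ := hL (max (Δ + η) (Bd + 2 * Δ))
    have hg1 : Δ + η < φ (2 * t) - φ t := lt_of_le_of_lt (le_max_left _ _) hgt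
    have hg2 : Bd + 2 * Δ < φ (2 * t) - φ t := lt_of_le_of_lt (le_max_right _ _) hgt
    set m := max (M t) t with hm
    have hw := hW t ht0 hg1 m (le_max_right _ _)
    have h1 := hLh t ht0 m (le_max_left _ _)
    rw [abs_le] at h1
    exact ⟨t, ht0, by linarith [h1.1, h1.2]⟩
  have hL0 : L 0 = 0 := by
    show φ (M 0 + 0) - φ (M 0) = 0
    rw [add_zero]; ring
  obtain ⟨lam, hlam0, hlamb⟩ := raad L (3 * Δ) (η + 2 * Δ) (by linarith) (by linarith)
    hL0 hLadd hLmono hLub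
  have hfar : ∀ a : ℝ, 0 ≤ a → ∀ m, M a ≤ m → |(φ (m + a) - φ m) - lam * a| ≤ 4 * Δ := by
    intro a ha m hm
    have h1 := hLh a ha m hm
    have h2 := hlamb a ha
    rw [abs_le] at h1 h2 ⊢
    constructor <;> linarith [h1.1, h1.2, h2.1, h2.2]
  have hlow : ∀ a : ℝ, 0 ≤ a → lam * a - 4 * Δ ≤ φ a := by
    intro a ha
    have h1 := hfar a ha (M a) le_rfl
    have h2 := hsub (M a) a (hM0 a) ha
    rw [abs_le] at h1
    linarith [h1.1, h1.2]
  set y0 := (9 * Δ + 1) / (2 * lam) with hy0def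
  have hy0pos : 0 < y0 := div_pos (by linarith) (by linarith)
  have hlamy0 : lam * y0 = (9 * Δ + 1) / 2 := by
    rw [hy0def]
    field_simp
  have hdouble : ∀ x : ℝ, M y0 ≤ x → 2 * φ (x + y0) ≤ φ (2 * x + y0) + φ y0 + Δ := by
    intro x hx
    have hx0 : 0 ≤ x := le_trans (hM0 y0) hx
    have h := hFP x y0 (x + y0) hx0 hy0pos.le (by linarith)
    rw [show y0 + x = x + y0 by ring, show x + y0 - y0 = x by ring,
      show x + y0 + x = 2 * x + y0 by ring] at h
    have hf := hfar y0 hy0pos.le x hx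
    rw [abs_le] at hf
    rcases max_cases (φ x + φ x) (φ (2 * x + y0) + φ y0) with ⟨hmax, _⟩ | ⟨hmax, _⟩ <;>
      rw [hmax] at h
    · exfalso
      rw [show x + y0 = x + y0 by ring] at hf
      linarith [hf.1]
    · linarith
  -- BUMP
  have hbump : ∀ T : ℝ, ∃ t : ℝ, T ≤ t ∧ φ t - lam * t ≤ φ y0 + Δ + 1 := by
    by_contra hB
    push_neg at hB
    obtain ⟨T, hT⟩ := hB
    set x0 := max (max (M y0) T) 1 with hx0def
    have hx01 : (1 : ℝ) ≤ x0 := le_max_right _ _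
    have hx0M : M y0 ≤ x0 := le_trans (le_max_left _ _) (le_max_left _ _)
    have hx0T : T ≤ x0 := le_trans (le_max_right _ _) (le_max_left _ _)
    have hx0pos : (0 : ℝ) < x0 := lt_of_lt_of_le one_pos hx01
    have hu_geM : ∀ n : ℕ, M y0 ≤ 2 ^ n * x0 := by
      intro n
      have h2 : (1 : ℝ) ≤ 2 ^ n := one_le_pow₀ (by norm_num)
      nlinarith
    have hstep : ∀ n : ℕ,
        2 * (φ (2 ^ n * x0 + y0) - lam * (2 ^ n * x0 + y0)) - (φ y0 + Δ) ≤
          φ (2 ^ (n + 1) * x0 + y0) - lam * (2 ^ (n + 1) * x0 + y0) := by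
      intro n
      have hd := hdouble (2 ^ n * x0) (hu_geM n)
      have e1 : (2 : ℝ) ^ (n + 1) * x0 + y0 = 2 * (2 ^ n * x0) + y0 := by
        rw [pow_succ]; ring
      rw [e1]
      have ex1 : lam * (2 ^ n * x0 + y0) = lam * (2 ^ n * x0) + lam * y0 := by ring
      have ex2 : lam * (2 * (2 ^ n * x0) + y0) = 2 * (lam * (2 ^ n * x0)) + lam * y0 := by
        ring
      have hly0 : 0 ≤ lam * y0 := by positivity
      linarith
    have hgrow : ∀ n : ℕ,
        (2 : ℝ) ^ n ≤ (φ (2 ^ n * x0 + y0) - lam * (2 ^ n * x0 + y0)) - (φ y0 + Δ) := by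
      intro n
      induction n with
      | zero =>
        have hT1 := hT (x0 + y0) (by linarith [hy0pos.le])
        norm_num
        linarith
      | succ n ih =>
        have hs := hstep n
        have ep : (2 : ℝ) ^ (n + 1) = 2 ^ n * 2 := pow_succ 2 n
        have hC2 : 0 ≤ φ y0 + Δ := by linarith [hpos y0 hy0pos.le]
        linarith
    set S := max (8 * Δ * (x0 + y0)) 1 with hSdef
    have hS1 : (1 : ℝ) ≤ S := le_max_right _ _
    have hSpos : (0 : ℝ) < S := lt_of_lt_of_le one_pos hS1
    have hS8 : 8 * Δ * (x0 + y0) ≤ S := le_max_left _ _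
    have hmS0 : 0 ≤ M S := hM0 S
    have hiterS : ∀ j : ℕ, φ (M S + j * S) ≤ φ (M S) + j * (lam * S + 4 * Δ) := by
      intro j
      induction j with
      | zero => simp
      | succ j ih =>
        have hf := hfar S (by linarith) (M S + j * S)
          (by nlinarith [Nat.cast_nonneg (α := ℝ) j])
        rw [abs_le] at hf
        have e : M S + ((j : ℝ) + 1) * S = M S + (j : ℝ) * S + S := by ring
        push_cast
        rw [e]
        nlinarith [hf.1, hf.2]
    have hFARIT : ∀ y : ℝ, M S ≤ y →
        φ y ≤ (φ (M S) + lam * S + 4 * Δ + η) + lam * y + 4 * Δ / S * y := by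
      intro y hy
      have hy0' : 0 ≤ y := le_trans hmS0 hy
      set j : ℕ := ⌈(y - M S) / S⌉₊ with hj
      have hj1 : (y - M S) / S ≤ (j : ℝ) := Nat.le_ceil _
      have hj2 : (j : ℝ) < (y - M S) / S + 1 :=
        Nat.ceil_lt_add_one (div_nonneg (by linarith) hSpos.le)
      have hy_le : y ≤ M S + j * S := by
        have := (div_le_iff₀ hSpos).mp hj1
        linarith
      have h1 : φ y ≤ φ (M S + j * S) + η := hmono y _ hy0' hy_le
      have h2 := hiterS j
      have hjb : (j : ℝ) ≤ y / S + 1 := by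
        have hmono2 : (y - M S) / S ≤ y / S :=
          (div_le_div_iff_of_pos_right hSpos).mpr (by linarith)
        linarith
      have hterm : (j : ℝ) * (lam * S + 4 * Δ) ≤ (y / S + 1) * (lam * S + 4 * Δ) := by
        apply mul_le_mul_of_nonneg_right hjb
        nlinarith
      have hexp : (y / S + 1) * (lam * S + 4 * Δ) =
          lam * y + 4 * Δ / S * y + (lam * S + 4 * Δ) := by
        field_simp
      linarith
    -- contradiction
    have hfinal : ∀ n : ℕ, M S ≤ 2 ^ n * x0 + y0 →
        2 ^ n * x0 + y0 ≤ 2 * (x0 + y0) * (φ (M S) + lam * S + 4 * Δ + η) := by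
      intro n hn
      set u := (2 : ℝ) ^ n * x0 + y0 with hu
      have hC2 : 0 ≤ φ y0 + Δ := by linarith [hpos y0 hy0pos.le]
      have hβ : (2 : ℝ) ^ n ≤ φ u - lam * u := by
        have hg := hgrow n
        rw [← hu] at hg
        linarith
      have h2n : (1 : ℝ) ≤ 2 ^ n := one_le_pow₀ (by norm_num)
      have hun_le : u ≤ 2 ^ n * (x0 + y0) := by
        rw [hu]
        nlinarith [hy0pos.le]
      have hupos : (0 : ℝ) < x0 + y0 := by linarith
      have hkey : u ≤ (x0 + y0) * (φ u - lam * u) := by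
        calc u ≤ 2 ^ n * (x0 + y0) := hun_le
          _ ≤ (φ u - lam * u) * (x0 + y0) := mul_le_mul_of_nonneg_right hβ hupos.le
          _ = (x0 + y0) * (φ u - lam * u) := by ring
      have hFR := hFARIT u hn
      have hun0 : 0 ≤ u := by nlinarith [hy0pos.le]
      have hfr : (x0 + y0) * (4 * Δ / S) ≤ 1 / 2 := by
        rw [show (x0 + y0) * (4 * Δ / S) = 4 * Δ * (x0 + y0) / S by ring,
          div_le_iff₀ hSpos]
        linarith
      have hfru : (x0 + y0) * (4 * Δ / S) * u ≤ 1 / 2 * u :=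
        mul_le_mul_of_nonneg_right hfr hun0
      have hc1 : φ u - lam * u ≤ (φ (M S) + lam * S + 4 * Δ + η) + 4 * Δ / S * u := by
        linarith
      have hc2 : (x0 + y0) * (φ u - lam * u) ≤
          (x0 + y0) * ((φ (M S) + lam * S + 4 * Δ + η) + 4 * Δ / S * u) :=
        mul_le_mul_of_nonneg_left hc1 hupos.le
      have hc3 : (x0 + y0) * ((φ (M S) + lam * S + 4 * Δ + η) + 4 * Δ / S * u) =
          (x0 + y0) * (φ (M S) + lam * S + 4 * Δ + η) + (x0 + y0) * (4 * Δ / S) * u := by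
        ring
      have h8 : u ≤ (x0 + y0) * (φ (M S) + lam * S + 4 * Δ + η) +
          (x0 + y0) * (4 * Δ / S) * u := by
        calc u ≤ (x0 + y0) * (φ u - lam * u) := hkey
          _ ≤ (x0 + y0) * ((φ (M S) + lam * S + 4 * Δ + η) + 4 * Δ / S * u) := hc2
          _ = _ := hc3
      have h9 : u ≤ (x0 + y0) * (φ (M S) + lam * S + 4 * Δ + η) + 1 / 2 * u := by
        linarith
      have h10 : 1 / 2 * u ≤ (x0 + y0) * (φ (M S) + lam * S + 4 * Δ + η) := by linarith
      linarith
    obtain ⟨n, hn⟩ := pow_unbounded_of_one_lt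
      (max (M S) (2 * (x0 + y0) * (φ (M S) + lam * S + 4 * Δ + η)))
      (by norm_num : (1 : ℝ) < 2)
    have h2n : (1 : ℝ) ≤ 2 ^ n := one_le_pow₀ (by norm_num)
    have hun_ge : (2 : ℝ) ^ n ≤ 2 ^ n * x0 + y0 := by nlinarith [hy0pos.le]
    have h1 : M S ≤ 2 ^ n * x0 + y0 :=
      le_trans (le_trans (le_max_left _ _) hn.le) hun_ge
    have h2 := hfinal n h1
    have h3 : max (M S) (2 * (x0 + y0) * (φ (M S) + lam * S + 4 * Δ + η)) < 2 ^ n * x0 + y0 :=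
      lt_of_lt_of_le hn hun_ge
    have h4 := le_max_right (M S) (2 * (x0 + y0) * (φ (M S) + lam * S + 4 * Δ + η))
    linarith
  -- rough additivity of φ
  have hRA : ∀ a b : ℝ, 0 ≤ a → 0 ≤ b →
      φ a + φ b - φ (a + b) ≤ (2 * (φ y0 + Δ + 1) + 4 * Δ) + 2 * Δ + 4 * η := by
    intro a b ha hb
    obtain ⟨t, htge, hβt⟩ := hbump (max a b)
    have hat : a ≤ t := le_trans (le_max_left _ _) htge
    have hbt : b ≤ t := le_trans (le_max_right _ _) htge
    have ht0 : 0 ≤ t := le_trans ha hat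
    have hlow2t := hlow (2 * t) (by linarith)
    have hDtt : 2 * φ t - φ (2 * t) ≤ 2 * (φ y0 + Δ + 1) + 4 * Δ := by
      have e : lam * (2 * t) = 2 * (lam * t) := by ring
      linarith
    set C' := 2 * (φ y0 + Δ + 1) + 4 * Δ with hC'
    have hP7 : φ a + φ t - φ (t + a) ≤ C' + Δ + 2 * η := by
      have h3 := hFP3 a t ha hat
      have hta : φ (t - a) ≤ φ t + η := hmono (t - a) t (by linarith) (by linarith)
      have htta : φ t ≤ φ (t + a) + η := hmono t (t + a) ht0 (by linarith)
      rcases max_cases (φ (t - a) + φ t) (φ t + φ (t + a)) with ⟨hmax, _⟩ | ⟨hmax, _⟩ <;>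
        rw [hmax] at h3 <;> linarith
    have h2 := hFP2 a b t ha hb hbt
    have htb : φ (t - b) ≤ φ t + η := hmono (t - b) t (by linarith) (by linarith)
    have hba : φ a ≤ φ (a + b) + η := hmono a (a + b) ha (by linarith)
    rcases max_cases (φ (t - b) + φ a) (φ t + φ (b + a)) with ⟨hmax, _⟩ | ⟨hmax, _⟩ <;>
      rw [hmax] at h2
    · linarith
    · rw [show b + a = a + b by ring] at h2
      linarith
  set C0 := (2 * (φ y0 + Δ + 1) + 4 * Δ) + 2 * Δ + 4 * η with hC0def
  have hC0 : 0 ≤ C0 := by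
    have := hpos y0 hy0pos.le
    rw [hC0def]; linarith
  obtain ⟨lam', hlam', hbd⟩ := raad φ C0 η hC0 hη h0
    (fun a b ha hb => abs_le.mpr ⟨by linarith [hRA a b ha hb], by linarith [hsub a b ha hb]⟩)
    hmono hub
  exact ⟨lam', C0, hlam', hC0, hbd⟩

set_option maxHeartbeats 1600000 in
/-- Theorem B. -/
theorem stmt_1 {X : Type} [MetricSpace X]
    (hray : HasRoughGeodesicRay X (fun x y : X => dist x y))
    (φ : ℝ → ℝ)
    (hnonneg : ∀ t : ℝ, 0 ≤ t → 0 ≤ φ t)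
    (hmt : IsMetricTransform φ)
    (hand : ApproxNondecreasing φ)
    (hub : UnboundedOnNonneg φ)
    (hhyp : IsGromovHyp (fun x y : X => φ (dist x y))) :
    ((IsGromovHyp (fun x y : X => dist x y) ∧ ApproxDilation φ) ∨
        ApproxUltrametric (fun x y : X => φ (dist x y))) ∧
      ¬((IsGromovHyp (fun x y : X => dist x y) ∧ ApproxDilation φ) ∧
        ApproxUltrametric (fun x y : X => φ (dist x y))) := by
  classical
  obtain ⟨η, hη, hmono⟩ := hand
  obtain ⟨k, hk, γ, hγ⟩ := hray
  obtain ⟨δ, hδ0, hδ⟩ := hhyp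
  have habsmetric : IsMetricOn (fun x y : ℝ => |x - y|) := by
    refine ⟨fun x y => ?_, fun x y => abs_sub_comm x y, fun x y z => abs_sub_le x y z⟩
    rw [abs_eq_zero, sub_eq_zero]
  have hφm := hmt ℝ _ habsmetric
  have h0 : φ 0 = 0 := by
    have h := (hφm.1 0 0).mpr rfl
    simpa using h
  have hsub : ∀ a b : ℝ, 0 ≤ a → 0 ≤ b → φ (a + b) ≤ φ a + φ b := by
    intro a b ha hb
    have h := hφm.2.2 0 a (a + b)
    simp only at h
    rw [show |(0:ℝ) - (a + b)| = a + b by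
          rw [zero_sub, abs_neg, abs_of_nonneg (by linarith : (0:ℝ) ≤ a + b)],
        show |(0:ℝ) - a| = a by rw [zero_sub, abs_neg, abs_of_nonneg ha],
        show |a - (a + b)| = b by
          rw [show a - (a + b) = -b by ring, abs_neg, abs_of_nonneg hb]] at h
    exact h
  -- the transformed distances along the ray are close to `φ` of parameter gaps
  have hK : ∀ u v : ℝ, 0 ≤ u → 0 ≤ v →
      |φ (dist (γ u) (γ v)) - φ (|u - v|)| ≤ φ k + η := by
    intro u v hu hv
    obtain ⟨hlow', hup'⟩ := hγ u v hu hv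
    have hd0 : (0:ℝ) ≤ dist (γ u) (γ v) := dist_nonneg
    have habs0 : (0:ℝ) ≤ |u - v| := abs_nonneg _
    have h1 : φ (dist (γ u) (γ v)) ≤ φ (|u - v| + k) + η := hmono _ _ hd0 hup'
    have h2 : φ (|u - v| + k) ≤ φ |u - v| + φ k := hsub _ _ habs0 hk
    have h3 : φ (|u - v|) ≤ φ (dist (γ u) (γ v) + k) + η := hmono _ _ habs0 (by linarith)
    have h4 : φ (dist (γ u) (γ v) + k) ≤ φ (dist (γ u) (γ v)) + φ k := hsub _ _ hd0 hk
    rw [abs_le]; constructor <;> linarith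
  -- four-point condition in pairing form on X for the transformed metric
  have hpair : ∀ x y z w : X,
      φ (dist x y) + φ (dist z w) ≤
        max (φ (dist x z) + φ (dist y w)) (φ (dist x w) + φ (dist y z)) + 2 * δ := by
    intro x y z w
    have h := hδ w x y z
    simp only [gromovProd] at h
    rcases min_cases ((φ (dist x w) + φ (dist z w) - φ (dist x z)) / 2)
        ((φ (dist y w) + φ (dist z w) - φ (dist y z)) / 2) with ⟨hmin, _⟩ | ⟨hmin, _⟩ <;>
      rw [hmin] at h
    · have hmx := le_max_left (φ (dist x z) + φ (dist y w)) (φ (dist x w) + φ (dist y z))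
      linarith
    · have hmx := le_max_right (φ (dist x z) + φ (dist y w)) (φ (dist x w) + φ (dist y z))
      linarith
  have hknn : 0 ≤ φ k := hnonneg k hk
  have hΔnn : 0 ≤ 2 * δ + 4 * (φ k + η) := by linarith
  -- four-point condition transferred to the half-line
  have hFPabs : ∀ p q r s : ℝ, 0 ≤ p → 0 ≤ q → 0 ≤ r → 0 ≤ s →
      φ |p - q| + φ |r - s| ≤
        max (φ |p - r| + φ |q - s|) (φ |p - s| + φ |q - r|) + (2 * δ + 4 * (φ k + η)) := by
    intro p q r s hp hq hr hs
    have h := hpair (γ p) (γ q) (γ r) (γ s)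
    have h1 := hK p q hp hq
    have h2 := hK r s hr hs
    have h3 := hK p r hp hr
    have h4 := hK q s hq hs
    have h5 := hK p s hp hs
    have h6 := hK q r hq hr
    rw [abs_le] at h1 h2 h3 h4 h5 h6
    rcases max_cases (φ (dist (γ p) (γ r)) + φ (dist (γ q) (γ s)))
        (φ (dist (γ p) (γ s)) + φ (dist (γ q) (γ r))) with ⟨hmax, _⟩ | ⟨hmax, _⟩ <;>
      rw [hmax] at h
    · have hmx := le_max_left (φ |p - r| + φ |q - s|) (φ |p - s| + φ |q - r|)
      linarith [h1.1, h1.2, h2.1, h2.2, h3.1, h3.2, h4.1, h4.2, h5.1, h5.2, h6.1, h6.2]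
    · have hmx := le_max_right (φ |p - r| + φ |q - s|) (φ |p - s| + φ |q - r|)
      linarith [h1.1, h1.2, h2.1, h2.2, h3.1, h3.2, h4.1, h4.2, h5.1, h5.2, h6.1, h6.2]
  constructor
  · -- the dichotomy
    rcases dichotomy_phi φ η (2 * δ + 4 * (φ k + η)) hη hΔnn hnonneg h0 hsub hmono hub
        hFPabs with hLog | hDil
    · -- logarithm-like case: the transformed metric is approximately ultrametric
      right
      obtain ⟨C, hC⟩ := hLog
      refine ⟨max C 0 + η, by
        have := le_max_right C 0
        linarith, ?_⟩
      intro x y z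
      have hm0 : (0:ℝ) ≤ max (dist x z) (dist z y) :=
        le_trans dist_nonneg (le_max_left _ _)
      have hxy : dist x y ≤ 2 * max (dist x z) (dist z y) := by
        have ht := dist_triangle x z y
        have e1 := le_max_left (dist x z) (dist z y)
        have e2 := le_max_right (dist x z) (dist z y)
        linarith
      have h1 : φ (dist x y) ≤ φ (2 * max (dist x z) (dist z y)) + η :=
        hmono _ _ dist_nonneg hxy
      have h2 : φ (2 * max (dist x z) (dist z y)) - φ (max (dist x z) (dist z y)) ≤ C :=
        hC _ hm0
      have h3 : φ (max (dist x z) (dist z y)) ≤ max (φ (dist x z)) (φ (dist z y)) := by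
        rcases max_choice (dist x z) (dist z y) with hm | hm <;> rw [hm]
        · exact le_max_left _ _
        · exact le_max_right _ _
      have h4 : C ≤ max C 0 := le_max_left _ _
      simp only
      linarith
    · -- approximate dilation case: the original metric is Gromov hyperbolic
      left
      obtain ⟨lam, kd, hlam, hkd, hbd⟩ := hDil
      refine ⟨⟨(δ + 3 * kd) / lam, div_nonneg (by linarith) hlam.le, ?_⟩,
        ⟨lam, kd, hlam, hkd, hbd⟩⟩
      intro w x y z
      have hrel : ∀ a b : X,
          lam * gromovProd (fun x y : X => dist x y) w a b - 3 / 2 * kd ≤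
            gromovProd (fun x y : X => φ (dist x y)) w a b ∧
          gromovProd (fun x y : X => φ (dist x y)) w a b ≤
            lam * gromovProd (fun x y : X => dist x y) w a b + 3 / 2 * kd := by
        intro a b
        have h1 := hbd (dist a w) dist_nonneg
        have h2 := hbd (dist b w) dist_nonneg
        have h3 := hbd (dist a b) dist_nonneg
        rw [abs_le] at h1 h2 h3
        simp only [gromovProd]
        constructor <;> · nlinarith [h1.1, h1.2, h2.1, h2.2, h3.1, h3.2]
      have hδi := hδ w x y z
      have hlamδ : lam * ((δ + 3 * kd) / lam) = δ + 3 * kd := by field_simp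
      have e3 := (hrel x y).2
      rcases le_total (gromovProd (fun x y : X => dist x y) w x z)
          (gromovProd (fun x y : X => dist x y) w y z) with hc | hc
      · rw [min_eq_left hc]
        have e1 := (hrel x z).1
        have e2 := (hrel y z).1
        have e4 : lam * gromovProd (fun x y : X => dist x y) w x z ≤
            lam * gromovProd (fun x y : X => dist x y) w y z :=
          mul_le_mul_of_nonneg_left hc hlam.le
        have e5 : lam * gromovProd (fun x y : X => dist x y) w x z - 3 / 2 * kd ≤
            min (gromovProd (fun x y : X => φ (dist x y)) w x z)
              (gromovProd (fun x y : X => φ (dist x y)) w y z) :=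
          le_min (by linarith) (by linarith)
        apply (mul_le_mul_iff_right₀ hlam).mp
        have expand : lam * (gromovProd (fun x y : X => dist x y) w x z -
            (δ + 3 * kd) / lam) =
            lam * gromovProd (fun x y : X => dist x y) w x z -
              lam * ((δ + 3 * kd) / lam) := by ring
        rw [expand, hlamδ]
        linarith
      · rw [min_eq_right hc]
        have e1 := (hrel x z).1
        have e2 := (hrel y z).1
        have e4 : lam * gromovProd (fun x y : X => dist x y) w y z ≤
            lam * gromovProd (fun x y : X => dist x y) w x z :=
          mul_le_mul_of_nonneg_left hc hlam.le
        have e5 : lam * gromovProd (fun x y : X => dist x y) w y z - 3 / 2 * kd ≤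
            min (gromovProd (fun x y : X => φ (dist x y)) w x z)
              (gromovProd (fun x y : X => φ (dist x y)) w y z) :=
          le_min (by linarith) (by linarith)
        apply (mul_le_mul_iff_right₀ hlam).mp
        have expand : lam * (gromovProd (fun x y : X => dist x y) w y z -
            (δ + 3 * kd) / lam) =
            lam * gromovProd (fun x y : X => dist x y) w y z -
              lam * ((δ + 3 * kd) / lam) := by ring
        rw [expand, hlamδ]
        linarith
  · -- the two alternatives are mutually exclusive
    rintro ⟨⟨-, lam, kd, hlam, hkd, hbd⟩, δu, hδu0, hult⟩
    set T := max k (2 * k + (2 * kd + δu) / lam + 1) with hT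
    have hTk : k ≤ T := le_max_left _ _
    have hTT : 2 * k + (2 * kd + δu) / lam + 1 ≤ T := le_max_right _ _
    have hT0 : (0:ℝ) ≤ T := le_trans hk hTk
    have h2T : (0:ℝ) ≤ 2 * T := by linarith
    obtain ⟨hl1, hu1⟩ := hγ 0 T le_rfl hT0
    obtain ⟨hl2, hu2⟩ := hγ T (2 * T) hT0 h2T
    obtain ⟨hl3, hu3⟩ := hγ 0 (2 * T) le_rfl h2T
    rw [show |(0:ℝ) - T| = T by rw [zero_sub, abs_neg, abs_of_nonneg hT0]] at hl1 hu1
    rw [show |T - 2 * T| = T by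
        rw [show T - 2 * T = -T by ring, abs_neg, abs_of_nonneg hT0]] at hl2 hu2
    rw [show |(0:ℝ) - 2 * T| = 2 * T by
        rw [zero_sub, abs_neg, abs_of_nonneg h2T]] at hl3 hu3
    have hb1 := hbd (dist (γ 0) (γ T)) dist_nonneg
    have hb2 := hbd (dist (γ T) (γ (2 * T))) dist_nonneg
    have hb3 := hbd (dist (γ 0) (γ (2 * T))) dist_nonneg
    rw [abs_le] at hb1 hb2 hb3
    have hu := hult (γ 0) (γ (2 * T)) (γ T)
    simp only at hu
    have hm1 : lam * dist (γ 0) (γ T) ≤ lam * (T + k) :=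
      mul_le_mul_of_nonneg_left hu1 hlam.le
    have hm2 : lam * dist (γ T) (γ (2 * T)) ≤ lam * (T + k) :=
      mul_le_mul_of_nonneg_left hu2 hlam.le
    have hm3 : lam * (2 * T - k) ≤ lam * dist (γ 0) (γ (2 * T)) :=
      mul_le_mul_of_nonneg_left hl3 hlam.le
    have hmax_le : max (φ (dist (γ 0) (γ T))) (φ (dist (γ T) (γ (2 * T)))) ≤
        lam * (T + k) + kd :=
      max_le (by linarith [hb1.2]) (by linarith [hb2.2])
    have hq : lam * ((2 * kd + δu) / lam) = 2 * kd + δu := by field_simp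
    have hmul2 : lam * (2 * k + (2 * kd + δu) / lam + 1) ≤ lam * T :=
      mul_le_mul_of_nonneg_left hTT hlam.le
    have hexp : lam * (2 * k + (2 * kd + δu) / lam + 1) =
        2 * (lam * k) + lam * ((2 * kd + δu) / lam) + lam := by ring
    have hexp2 : lam * (2 * T - k) = 2 * (lam * T) - lam * k := by ring
    have hexp3 : lam * (T + k) = lam * T + lam * k := by ring
    linarith [hb3.1, hlam]
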